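/- Let T > 0 and let μ : [0, T] → ℝ be continuously differentiable with μ(T) = 0. Then r·∫_0^T μ(s)·cos(r·(T - s)) ds − μ(0)·sin(r·T) → 0 as r → +∞; that is, ∫_0^T μ(s) cos(r(T-s)) ds = μ(0)·sin(rT)/r + o(1/r) as r → ∞. -/

import Mathlib

open Real Filter MeasureTheory intervalIntegral FourierTransform

theorem riemann_lebesgue_cos_asymptotics
    (T : ℝ) (hT : 0 < T) (μ : ℝ → ℝ)
    (hμ : ContDiffOn ℝ 1 μ (Set.Icc 0 T)) (hμT : μ T = 0) :
    Tendsto (fun r : ℝ =>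
        r * (∫ s in (0:ℝ)..T, μ s * Real.cos (r * (T - s))) - μ 0 * Real.sin (r * T))
      atTop (nhds 0) := by
  set g : ℝ → ℝ := derivWithin μ (Set.Icc 0 T) with hg
  have hUD : UniqueDiffOn ℝ (Set.Icc (0:ℝ) T) := uniqueDiffOn_Icc hT
  have hgc : ContinuousOn g (Set.Icc 0 T) := hμ.continuousOn_derivWithin hUD le_rfl
  have hμc : ContinuousOn μ (Set.Icc 0 T) := hμ.continuousOn
  have hIcc : Set.uIcc (0:ℝ) T = Set.Icc 0 T := Set.uIcc_of_le hT.le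
  -- Step 1: integration by parts identity
  have key : ∀ r : ℝ,
      r * (∫ s in (0:ℝ)..T, μ s * Real.cos (r * (T - s))) - μ 0 * Real.sin (r * T)
        = ∫ s in (0:ℝ)..T, g s * Real.sin (r * (T - s)) := by
    intro r
    have hder : ∀ x ∈ Set.uIcc (0:ℝ) T, HasDerivWithinAt μ (g x) (Set.uIcc (0:ℝ) T) x := by
      intro x hx
      rw [hIcc] at hx ⊢
      exact ((hμ.differentiableOn one_ne_zero) x hx).hasDerivWithinAt
    have hderv : ∀ x ∈ Set.uIcc (0:ℝ) T,
        HasDerivWithinAt (fun s => Real.sin (r * (T - s)))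
          (-r * Real.cos (r * (T - x))) (Set.uIcc (0:ℝ) T) x := by
      intro x _
      have h1 : HasDerivAt (fun s : ℝ => r * (T - s)) (-r) x := by
        simpa using ((hasDerivAt_id x).const_sub T).const_mul r
      have h2 := (Real.hasDerivAt_sin (r * (T - x))).comp x h1
      have h3 : HasDerivAt (fun s => Real.sin (r * (T - s)))
          (-r * Real.cos (r * (T - x))) x := by
        rw [mul_comm]; exact h2
      exact h3.hasDerivWithinAt
    have hint_g : IntervalIntegrable g volume 0 T := by
      apply ContinuousOn.intervalIntegrable; rw [hIcc]; exact hgc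
    have hint_v' : IntervalIntegrable (fun x => -r * Real.cos (r * (T - x))) volume 0 T :=
      (Continuous.intervalIntegrable (by fun_prop) 0 T)
    have ibp := intervalIntegral.integral_deriv_mul_eq_sub_of_hasDerivWithinAt
      (u := μ) (v := fun s => Real.sin (r * (T - s))) (u' := g)
      (v' := fun x => -r * Real.cos (r * (T - x))) hder hderv hint_g hint_v'
    have hA : IntervalIntegrable (fun x => g x * Real.sin (r * (T - x))) volume 0 T := by
      apply ContinuousOn.intervalIntegrable; rw [hIcc]
      exact hgc.mul (Continuous.continuousOn (by fun_prop))
    have hB : IntervalIntegrable (fun x => μ x * (-r * Real.cos (r * (T - x)))) volume 0 T := by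
      apply ContinuousOn.intervalIntegrable; rw [hIcc]
      exact hμc.mul (Continuous.continuousOn (by fun_prop))
    rw [intervalIntegral.integral_add hA hB] at ibp
    have hBeq : (∫ x in (0:ℝ)..T, μ x * (-r * Real.cos (r * (T - x))))
        = -r * ∫ x in (0:ℝ)..T, μ x * Real.cos (r * (T - x)) := by
      rw [← intervalIntegral.integral_const_mul]
      congr 1; ext x; ring
    rw [hBeq, hμT] at ibp
    simp only [sub_zero, zero_mul, zero_sub] at ibp
    linarith
  -- Step 2: Riemann–Lebesgue
  have step2 : Tendsto (fun r : ℝ => ∫ s in (0:ℝ)..T, g s * Real.sin (r * (T - s)))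
      atTop (nhds 0) := by
    set f : ℝ → ℂ := (Set.Icc (0:ℝ) T).indicator (fun s => (g s : ℂ)) with hf
    have hπ : (0:ℝ) < 2 * π := by positivity
    have hRL : Tendsto (fun r : ℝ => ‖𝓕 f (r / (2 * π))‖) atTop (nhds 0) := by
      have h1 := Real.zero_at_infty_fourier f
      have h2 : Tendsto (fun r : ℝ => r / (2 * π)) atTop atTop :=
        tendsto_id.atTop_div_const hπ
      have h3 : Tendsto (fun r : ℝ => 𝓕 f (r / (2 * π))) atTop (nhds 0) :=
        h1.comp (h2.mono_right (by rw [cocompact_eq_atBot_atTop]; exact le_sup_right))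
      simpa using h3.norm
    apply squeeze_zero_norm _ hRL
    intro r
    -- Fourier integral rewritten
    have hFeq : 𝓕 f (r / (2 * π))
        = ∫ v in Set.Icc (0:ℝ) T, Complex.exp ((-(v * r) : ℝ) * Complex.I) * (g v : ℂ) := by
      rw [Real.fourier_real_eq_integral_exp_smul]
      have hexp : ∀ v : ℝ, ((-2 * π * v * (r / (2 * π)) : ℝ) : ℂ) = ((-(v * r) : ℝ) : ℂ) := by
        intro v; rw [show -2 * π * v * (r / (2 * π)) = -(v * r) * ((2 * π) / (2 * π)) by ring, div_self hπ.ne', mul_one]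
      simp_rw [smul_eq_mul, hexp]
      rw [← MeasureTheory.integral_indicator measurableSet_Icc]
      congr 1; ext v
      simp only [hf, Set.indicator_apply]
      split_ifs <;> simp
    have hgi : IntegrableOn (fun v => Complex.exp ((-(v * r) : ℝ) * Complex.I) * (g v : ℂ))
        (Set.Icc (0:ℝ) T) := by
      apply ContinuousOn.integrableOn_compact isCompact_Icc
      exact (Continuous.continuousOn (by fun_prop)).mul
        (Complex.continuous_ofReal.comp_continuousOn hgc)
    set z : ℂ := Complex.exp ((r * T : ℝ) * Complex.I) * 𝓕 f (r / (2 * π)) with hz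
    have hzim : (∫ s in (0:ℝ)..T, g s * Real.sin (r * (T - s))) = z.im := by
      have hz2 : z = ∫ v in Set.Icc (0:ℝ) T,
          Complex.exp ((r * (T - v) : ℝ) * Complex.I) * (g v : ℂ) := by
        rw [hz, hFeq, ← MeasureTheory.integral_const_mul]
        congr 1; ext v
        rw [← mul_assoc, ← Complex.exp_add]
        congr 2
        push_cast; ring
      have hgi2 : IntegrableOn (fun v => Complex.exp ((r * (T - v) : ℝ) * Complex.I) * (g v : ℂ))
          (Set.Icc (0:ℝ) T) := by
        apply ContinuousOn.integrableOn_compact isCompact_Icc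
        exact (Continuous.continuousOn (by fun_prop)).mul
          (Complex.continuous_ofReal.comp_continuousOn hgc)
      have him := (Complex.imCLM.integral_comp_comm hgi2).symm
      simp only [Complex.imCLM_apply] at him
      rw [hz2, him]
      rw [intervalIntegral.integral_of_le hT.le, ← MeasureTheory.integral_Icc_eq_integral_Ioc]
      congr 1; ext v
      rw [Complex.mul_im, Complex.exp_ofReal_mul_I_re, Complex.exp_ofReal_mul_I_im,
        Complex.ofReal_im, Complex.ofReal_re]
      ring
    rw [hzim]
    have h1 : |z.im| ≤ ‖z‖ := Complex.abs_im_le_norm z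
    have h2 : ‖z‖ = ‖𝓕 f (r / (2 * π))‖ := by
      rw [hz, norm_mul, Complex.norm_exp_ofReal_mul_I, one_mul]
    rw [Real.norm_eq_abs]
    rw [h2] at h1
    exact h1
  have hfun : (fun r : ℝ =>
      r * (∫ s in (0:ℝ)..T, μ s * Real.cos (r * (T - s))) - μ 0 * Real.sin (r * T))
      = fun r : ℝ => ∫ s in (0:ℝ)..T, g s * Real.sin (r * (T - s)) := funext key
  rw [hfun]
  exact step2
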